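/- Planner-aware evidence lower bound (P-ELBO): let V, D, G be as below, let p^G(x_0) be the probability that planner-guided sampling produces x_0, and let r^G_k(·; x_0) be the step-k distribution of the reference chain Y^{x_0}. Then log p^G(x_0) ≥ 𝓔_1(x_0) + 𝓔_2(x_0), where 𝓔_1(x_0) = L · E_{k ~ Unif({0,...,L-1})} E_{x_k ~ r^G_k(·;x_0)}[ Σ_{i : x_k^i = m} Cat(i; G(x_0, x_k)) · log Cat( x_0^i; D^i(x_k) ) ] and 𝓔_2(x_0) = − L · E_{k ~ Unif({0,...,L-1})} E_{x_k ~ r^G_k(·;x_0)}[ Σ_{i : x_k^i = m} Cat(i; G(x_0, x_k)) · log( Cat(i; G(x_0, x_k)) / F(x_k, x_0^i, i) ) ], with F(x, y, i) = E_{z ~ D(x)}[ Cat(i; G(z^{-i,y}, x)) ]. -/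

import Mathlib

open Finset

/-- `Fplan D G x y i = E_{z ~ D(x)}[ Cat(i ; G(z^{-i,y}, x)) ]`, the coordinates of `z`
being sampled independently, `z^j ~ D^j(x)`. -/
noncomputable def Fplan {V : Type*} [Fintype V] [DecidableEq V] {L : ℕ}
    (D : (Fin L → V) → Fin L → V → ℝ)
    (G : (Fin L → V) → (Fin L → V) → Fin L → ℝ)
    (x : Fin L → V) (y : V) (i : Fin L) : ℝ :=
  ∑ z : Fin L → V, (∏ j, D x j (z j)) * G (Function.update z i y) x i

/-- One step of planner-guided sampling: from state `x`, sample `z ~ D(x)`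
coordinatewise independently, sample a position `i ~ G(z, x)`, and replace the `i`-th
coordinate of `x` by `z i`. -/
noncomputable def stepKernel {V : Type*} [Fintype V] [DecidableEq V] {L : ℕ}
    (D : (Fin L → V) → Fin L → V → ℝ)
    (G : (Fin L → V) → (Fin L → V) → Fin L → ℝ)
    (x w : Fin L → V) : ℝ :=
  ∑ z : Fin L → V, (∏ j, D x j (z j)) *
    ∑ i ∈ Finset.univ.filter (fun i : Fin L => Function.update x i (z i) = w), G z x i

/-- The distribution of the state after `k` steps of planner-guided sampling,
starting from the fully masked sequence; `sampleDist D G mask L` is `p^G`. -/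
noncomputable def sampleDist {V : Type*} [Fintype V] [DecidableEq V] {L : ℕ}
    (D : (Fin L → V) → Fin L → V → ℝ)
    (G : (Fin L → V) → (Fin L → V) → Fin L → ℝ)
    (mask : V) : ℕ → (Fin L → V) → ℝ
  | 0, w => if w = (fun _ => mask) then (1 : ℝ) else 0
  | k + 1, w => ∑ x : Fin L → V, sampleDist D G mask k x * stepKernel D G x w

/-- The step-`k` law `r^G_k(·; x₀)` of the reference chain `Y^{x₀}`: starting from the
fully masked sequence, at each step a masked coordinate `i` is selected with
probability `Cat(i; G(x₀, x))` and set to `x₀ i`. -/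
noncomputable def refDist {V : Type*} [Fintype V] [DecidableEq V] {L : ℕ}
    (G : (Fin L → V) → (Fin L → V) → Fin L → ℝ)
    (mask : V) (x0 : Fin L → V) : ℕ → (Fin L → V) → ℝ
  | 0, w => if w = (fun _ => mask) then (1 : ℝ) else 0
  | k + 1, w => ∑ x : Fin L → V,
      refDist G mask x0 k x *
        ∑ i ∈ Finset.univ.filter
            (fun i : Fin L => x i = mask ∧ Function.update x i (x0 i) = w),
          G x0 x i

section Aux

variable {V : Type*} [Fintype V] [DecidableEq V] {L : ℕ}
    (D : (Fin L → V) → Fin L → V → ℝ)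
    (G : (Fin L → V) → (Fin L → V) → Fin L → ℝ)

/-- Backward reachability: probability of reaching `x0` from `x` in `n` steps. -/
noncomputable def bwd (x0 : Fin L → V) : ℕ → (Fin L → V) → ℝ
  | 0, x => if x = x0 then (1 : ℝ) else 0
  | n + 1, x => ∑ w : Fin L → V, stepKernel D G x w * bwd x0 n w

lemma prod_update_D (x z : Fin L → V) (i : Fin L) (c : V) :
    (∏ j, D x j (Function.update z i c j)) = D x i c * ∏ j ∈ univ \ {i}, D x j (z j) := by
  have h : ∀ j : Fin L, D x j (Function.update z i c j)
      = Function.update (fun j => D x j (z j)) i (D x i c) j := by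
    intro j
    rcases eq_or_ne j i with rfl | hj
    · simp
    · simp [Function.update_of_ne hj]
  rw [Finset.prod_congr rfl fun j _ => h j, Finset.prod_update_of_mem (mem_univ i)]

lemma Fplan_mul (hD1 : ∀ x i, ∑ y, D x i y = 1) (x : Fin L → V) (y : V) (i : Fin L) :
    ∑ z ∈ univ.filter (fun z : Fin L → V => z i = y), (∏ j, D x j (z j)) * G z x i
      = D x i y * Fplan D G x y i := by
  have key : ∀ c : V,
      (∑ z ∈ univ.filter (fun z : Fin L → V => z i = c),
          (∏ j, D x j (z j)) * G (Function.update z i y) x i)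
        = D x i c * ∑ z ∈ univ.filter (fun z : Fin L → V => z i = y),
            (∏ j ∈ univ \ {i}, D x j (z j)) * G z x i := by
    intro c
    rw [Finset.mul_sum]
    refine Finset.sum_nbij' (fun z => Function.update z i y)
      (fun z => Function.update z i c) ?_ ?_ ?_ ?_ ?_
    · intro z hz; simp
    · intro z hz; simp
    · intro z hz
      simp only [mem_filter, mem_univ, true_and] at hz
      rw [Function.update_idem, ← hz]
      exact Function.update_eq_self i z
    · intro z hz
      simp only [mem_filter, mem_univ, true_and] at hz
      rw [Function.update_idem, ← hz]
      exact Function.update_eq_self i z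
    · intro z hz
      simp only [mem_filter, mem_univ, true_and] at hz
      have h1 : (∏ j, D x j (z j)) = D x i c * ∏ j ∈ univ \ {i}, D x j (z j) := by
        have h2 := prod_update_D D x z i c
        have h3 : Function.update z i c = z := by rw [← hz]; exact Function.update_eq_self i z
        rw [h3] at h2
        exact h2
      have h4 : ∀ j ∈ univ \ {i}, D x j (z j) = D x j (Function.update z i y j) := by
        intro j hj
        simp only [mem_sdiff, mem_singleton] at hj
        rw [Function.update_of_ne hj.2]
      rw [h1, Finset.prod_congr rfl h4, mul_assoc]
  have hf : Fplan D G x y i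
      = ∑ z ∈ univ.filter (fun z : Fin L → V => z i = y),
          (∏ j ∈ univ \ {i}, D x j (z j)) * G z x i := by
    rw [Fplan, ← Finset.sum_fiberwise univ (fun z : Fin L → V => z i)
        (fun z => (∏ j, D x j (z j)) * G (Function.update z i y) x i),
      Finset.sum_congr rfl fun c _ => key c, ← Finset.sum_mul, hD1, one_mul]
  rw [hf, Finset.mul_sum]
  refine Finset.sum_congr rfl fun z hz => ?_
  simp only [mem_filter, mem_univ, true_and] at hz
  have h1 : (∏ j, D x j (z j)) = D x i y * ∏ j ∈ univ \ {i}, D x j (z j) := by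
    have h2 := prod_update_D D x z i y
    have h3 : Function.update z i y = z := by rw [← hz]; exact Function.update_eq_self i z
    rw [h3] at h2
    exact h2
  rw [h1, mul_assoc]

lemma stepKernel_nonneg (hD0 : ∀ x i y, 0 ≤ D x i y) (hG0 : ∀ z x i, 0 ≤ G z x i)
    (x w : Fin L → V) : 0 ≤ stepKernel D G x w :=
  Finset.sum_nonneg fun z _ => mul_nonneg (Finset.prod_nonneg fun j _ => hD0 _ _ _)
    (Finset.sum_nonneg fun i _ => hG0 _ _ _)

lemma bwd_nonneg (hD0 : ∀ x i y, 0 ≤ D x i y) (hG0 : ∀ z x i, 0 ≤ G z x i)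
    (x0 : Fin L → V) : ∀ n x, 0 ≤ bwd D G x0 n x := by
  intro n
  induction n with
  | zero => intro x; rw [bwd]; positivity
  | succ n ih =>
    intro x
    rw [bwd]
    exact Finset.sum_nonneg fun w _ =>
      mul_nonneg (stepKernel_nonneg D G hD0 hG0 x w) (ih w)

lemma refDist_nonneg (hG0 : ∀ z x i, 0 ≤ G z x i) (mask : V) (x0 : Fin L → V) :
    ∀ k x, 0 ≤ refDist G mask x0 k x := by
  intro k
  induction k with
  | zero => intro x; rw [refDist]; positivity
  | succ k ih =>
    intro x
    rw [refDist]
    exact Finset.sum_nonneg fun x' _ =>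
      mul_nonneg (ih x') (Finset.sum_nonneg fun i _ => hG0 _ _ _)

lemma stepKernel_ge (hD0 : ∀ x i y, 0 ≤ D x i y) (hD1 : ∀ x i, ∑ y, D x i y = 1)
    (hG0 : ∀ z x i, 0 ≤ G z x i) (x0 x : Fin L → V) (i : Fin L) :
    D x i (x0 i) * Fplan D G x (x0 i) i
      ≤ stepKernel D G x (Function.update x i (x0 i)) := by
  rw [← Fplan_mul D G hD1, stepKernel, Finset.sum_filter]
  refine Finset.sum_le_sum fun z _ => ?_
  by_cases hz : z i = x0 i
  · rw [if_pos hz]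
    refine mul_le_mul_of_nonneg_left ?_ (Finset.prod_nonneg fun j _ => hD0 _ _ _)
    refine Finset.single_le_sum (f := fun i' => G z x i') (fun i' _ => hG0 _ _ _) ?_
    simp [hz]
  · rw [if_neg hz]
    exact mul_nonneg (Finset.prod_nonneg fun j _ => hD0 _ _ _)
      (Finset.sum_nonneg fun i' _ => hG0 _ _ _)

lemma fb (mask : V) (x0 : Fin L → V) :
    ∀ n k, ∑ x : Fin L → V, sampleDist D G mask k x * bwd D G x0 n x
      = sampleDist D G mask (k + n) x0 := by
  intro n
  induction n with
  | zero =>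
    intro k
    simp only [bwd, mul_ite, mul_one, mul_zero, Nat.add_zero]
    rw [Finset.sum_ite_eq' univ x0 (fun x => sampleDist D G mask k x)]
    simp
  | succ n ih =>
    intro k
    have h1 : ∑ x : Fin L → V, sampleDist D G mask k x * bwd D G x0 (n + 1) x
        = ∑ w : Fin L → V, sampleDist D G mask (k + 1) w * bwd D G x0 n w := by
      simp only [sampleDist, bwd, Finset.mul_sum, Finset.sum_mul]
      rw [Finset.sum_comm]
      exact Finset.sum_congr rfl fun w _ => Finset.sum_congr rfl fun x _ => by ring
    rw [h1, ih (k + 1), show k + 1 + n = k + (n + 1) from by omega]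

lemma sampleDist_eq_bwd (mask : V) (x0 : Fin L → V) :
    sampleDist D G mask L x0 = bwd D G x0 L (fun _ => mask) := by
  have h := fb D G mask x0 L 0
  rw [Nat.zero_add] at h
  rw [← h]
  simp only [sampleDist, ite_mul, one_mul, zero_mul]
  rw [Finset.sum_ite_eq' univ (fun _ => mask) (fun x => bwd D G x0 L x)]
  simp

lemma ref_support (hG0 : ∀ z x i, 0 ≤ G z x i) (mask : V) (x0 : Fin L → V)
    (hx0 : ∀ i, x0 i ≠ mask) :
    ∀ k x, 0 < refDist G mask x0 k x →
      (∀ i, x i = mask ∨ x i = x0 i) ∧ (univ.filter fun i => x i ≠ mask).card = k := by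
  intro k
  induction k with
  | zero =>
    intro x hx
    rw [refDist] at hx
    by_cases h : x = (fun _ => mask)
    · subst h
      refine ⟨fun i => Or.inl rfl, ?_⟩
      simp
    · rw [if_neg h] at hx; exact absurd hx (lt_irrefl 0)
  | succ k ih =>
    intro x hx
    rw [refDist] at hx
    have h0 : ∑ _x' : Fin L → V, (0:ℝ) < ∑ x' : Fin L → V, refDist G mask x0 k x' *
        ∑ i ∈ Finset.univ.filter
            (fun i : Fin L => x' i = mask ∧ Function.update x' i (x0 i) = x), G x0 x' i := by
      simpa using hx
    obtain ⟨x', -, hx'⟩ := Finset.exists_lt_of_sum_lt h0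
    have hr : 0 < refDist G mask x0 k x' := by
      rcases (refDist_nonneg G hG0 mask x0 k x').lt_or_eq with h | h
      · exact h
      · rw [← h, zero_mul] at hx'; exact absurd hx' (lt_irrefl 0)
    have hssum : 0 < ∑ i ∈ Finset.univ.filter
        (fun i : Fin L => x' i = mask ∧ Function.update x' i (x0 i) = x), G x0 x' i := by
      rcases (Finset.sum_nonneg fun i _ => hG0 x0 x' i :
          (0:ℝ) ≤ ∑ i ∈ Finset.univ.filter
            (fun i : Fin L => x' i = mask ∧ Function.update x' i (x0 i) = x),
              G x0 x' i).lt_or_eq with h | h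
      · exact h
      · rw [← h, mul_zero] at hx'; exact absurd hx' (lt_irrefl 0)
    have h0' : ∑ _i ∈ Finset.univ.filter
        (fun i : Fin L => x' i = mask ∧ Function.update x' i (x0 i) = x), (0:ℝ)
        < ∑ i ∈ Finset.univ.filter
          (fun i : Fin L => x' i = mask ∧ Function.update x' i (x0 i) = x), G x0 x' i := by
      simpa using hssum
    obtain ⟨i, hi, -⟩ := Finset.exists_lt_of_sum_lt h0' 
    simp only [mem_filter, mem_univ, true_and] at hi
    obtain ⟨him, hupd⟩ := hi
    obtain ⟨hshape, hcard⟩ := ih x' hr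
    subst hupd
    constructor
    · intro j
      rcases eq_or_ne j i with rfl | hj
      · right; rw [Function.update_self]
      · rw [Function.update_of_ne hj]; exact hshape j
    · have hins : (univ.filter fun j => Function.update x' i (x0 i) j ≠ mask)
          = insert i (univ.filter fun j => x' j ≠ mask) := by
        ext j
        simp only [mem_filter, mem_univ, true_and, mem_insert]
        rcases eq_or_ne j i with rfl | hj
        · simp [Function.update_self, hx0 j]
        · simp [Function.update_of_ne hj, hj]
      rw [hins, Finset.card_insert_of_notMem (by simp [him]), hcard]

lemma sum_G_masked (mask : V)
    (hG1 : ∀ z x, (∃ i, x i = mask) → ∑ i, G z x i = 1)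
    (hGsupp : ∀ z x i, x i ≠ mask → G z x i = 0)
    (z x : Fin L → V) (hm : ∃ i, x i = mask) :
    ∑ i ∈ univ.filter (fun i => x i = mask), G z x i = 1 := by
  rw [← hG1 z x hm]
  exact Finset.sum_subset (Finset.filter_subset _ _)
    (fun i _ hi => hGsupp z x i (by simpa using hi))

lemma refStep (mask : V) (x0 : Fin L → V) (f : (Fin L → V) → ℝ) (k : ℕ) :
    ∑ w : Fin L → V, refDist G mask x0 (k + 1) w * f w
      = ∑ x : Fin L → V, refDist G mask x0 k x *
          ∑ i ∈ univ.filter (fun i => x i = mask),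
            G x0 x i * f (Function.update x i (x0 i)) := by
  simp only [refDist, Finset.sum_mul]
  rw [Finset.sum_comm]
  refine Finset.sum_congr rfl fun x _ => ?_
  rw [Finset.mul_sum]
  have h1 : ∀ w : Fin L → V,
      refDist G mask x0 k x *
          (∑ i ∈ Finset.univ.filter
            (fun i : Fin L => x i = mask ∧ Function.update x i (x0 i) = w), G x0 x i) * f w
        = ∑ i ∈ univ.filter (fun i => x i = mask),
            if Function.update x i (x0 i) = w
            then refDist G mask x0 k x * (G x0 x i * f w) else 0 := by
    intro w
    rw [← Finset.filter_filter, Finset.sum_filter, Finset.mul_sum, Finset.sum_mul]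
    refine Finset.sum_congr rfl fun i _ => ?_
    by_cases h : Function.update x i (x0 i) = w
    · rw [if_pos h, if_pos h]; ring
    · rw [if_neg h, if_neg h]; ring
  rw [Finset.sum_congr rfl fun w _ => h1 w, Finset.sum_comm]
  refine Finset.sum_congr rfl fun i _ => ?_
  rw [Finset.sum_ite_eq univ (Function.update x i (x0 i))
    (fun w => refDist G mask x0 k x * (G x0 x i * f w))]
  simp

lemma bwd_pos (mask : V) (x0 : Fin L → V)
    (hD0 : ∀ x i y, 0 ≤ D x i y) (hD1 : ∀ x i, ∑ y, D x i y = 1)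
    (hG0 : ∀ z x i, 0 ≤ G z x i)
    (hG1 : ∀ z x, (∃ i, x i = mask) → ∑ i, G z x i = 1)
    (hGsupp : ∀ z x i, x i ≠ mask → G z x i = 0)
    (hx0 : ∀ i, x0 i ≠ mask)
    (hpos : ∀ k, k < L → ∀ x : Fin L → V, 0 < refDist G mask x0 k x →
      ∀ i, x i = mask → 0 < G x0 x i →
        0 < D x i (x0 i) ∧ 0 < Fplan D G x (x0 i) i) :
    ∀ n k, k + n = L → ∀ x, 0 < refDist G mask x0 k x → 0 < bwd D G x0 n x := by
  intro n
  induction n with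
  | zero =>
    intro k hk x hx
    have hL : k = L := by omega
    obtain ⟨hshape, hcard⟩ := ref_support G hG0 mask x0 hx0 k x hx
    have huniv : (univ.filter fun i => x i ≠ mask) = univ :=
      Finset.eq_univ_of_card _ (by simp [hcard, hL])
    have hall : ∀ j, x j ≠ mask := by
      rw [Finset.eq_univ_iff_forall] at huniv
      exact fun j => (Finset.mem_filter.mp (huniv j)).2
    have hxx0 : x = x0 := funext fun i => (hshape i).resolve_left (hall i)
    rw [bwd, if_pos hxx0]
    exact one_pos
  | succ n ih =>
    intro k hk x hx
    have hkL : k < L := by omega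
    obtain ⟨hshape, hcard⟩ := ref_support G hG0 mask x0 hx0 k x hx
    have hmask : ∃ i, x i = mask := by
      by_contra h
      push_neg at h
      have : (univ.filter fun i => x i ≠ mask) = univ := by
        refine Finset.eq_univ_of_forall fun i => ?_
        simp [h i]
      rw [this] at hcard
      simp at hcard
      omega
    have hsum1 : ∑ i ∈ univ.filter (fun i => x i = mask), G x0 x i = 1 :=
      sum_G_masked G mask hG1 hGsupp x0 x hmask
    have hex : ∃ i ∈ univ.filter (fun i => x i = mask), 0 < G x0 x i := by
      by_contra h
      push_neg at h
      have : ∑ i ∈ univ.filter (fun i => x i = mask), G x0 x i ≤ 0 :=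
        Finset.sum_nonpos fun i hi => h i hi
      rw [hsum1] at this
      linarith
    obtain ⟨i, hi, hGi⟩ := hex
    have him : x i = mask := (Finset.mem_filter.mp hi).2
    obtain ⟨hD, hF⟩ := hpos k hkL x hx i him hGi
    have hr' : 0 < refDist G mask x0 (k + 1) (Function.update x i (x0 i)) := by
      rw [refDist]
      have hterm : 0 < refDist G mask x0 k x *
          ∑ i' ∈ Finset.univ.filter
            (fun i' : Fin L => x i' = mask ∧
              Function.update x i' (x0 i') = Function.update x i (x0 i)), G x0 x i' := by
        refine mul_pos hx ?_
        refine lt_of_lt_of_le hGi ?_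
        refine Finset.single_le_sum (f := fun i' => G x0 x i') (fun i' _ => hG0 _ _ _) ?_
        simp [him]
      calc (0:ℝ) < _ := hterm
        _ ≤ _ := Finset.single_le_sum
            (f := fun x' => refDist G mask x0 k x' *
              ∑ i' ∈ Finset.univ.filter
                (fun i' : Fin L => x' i' = mask ∧
                  Function.update x' i' (x0 i') = Function.update x i (x0 i)), G x0 x' i')
            (fun x' _ => mul_nonneg (refDist_nonneg G hG0 mask x0 k x')
              (Finset.sum_nonneg fun i' _ => hG0 _ _ _)) (Finset.mem_univ x)
    have hb : 0 < bwd D G x0 n (Function.update x i (x0 i)) :=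
      ih (k + 1) (by omega) _ hr'
    rw [bwd]
    calc (0:ℝ) < D x i (x0 i) * Fplan D G x (x0 i) i * bwd D G x0 n (Function.update x i (x0 i)) :=
          mul_pos (mul_pos hD hF) hb
      _ ≤ stepKernel D G x (Function.update x i (x0 i)) *
            bwd D G x0 n (Function.update x i (x0 i)) :=
          mul_le_mul_of_nonneg_right (stepKernel_ge D G hD0 hD1 hG0 x0 x i) hb.le
      _ ≤ ∑ w : Fin L → V, stepKernel D G x w * bwd D G x0 n w :=
          Finset.single_le_sum
            (f := fun w => stepKernel D G x w * bwd D G x0 n w)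
            (fun w _ => mul_nonneg (stepKernel_nonneg D G hD0 hG0 x w)
              (bwd_nonneg D G hD0 hG0 x0 n w)) (Finset.mem_univ _)

lemma log_jensen {ι : Type*} (t : Finset ι) (w q : ι → ℝ) (h0 : ∀ i ∈ t, 0 ≤ w i)
    (h1 : ∑ i ∈ t, w i = 1) (hq : ∀ i ∈ t, 0 < q i) :
    ∑ i ∈ t, w i * Real.log (q i) ≤ Real.log (∑ i ∈ t, w i * q i) := by
  have := (strictConcaveOn_log_Ioi.concaveOn).le_map_sum h0 h1
    (fun i hi => Set.mem_Ioi.mpr (hq i hi))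
  simpa [smul_eq_mul] using this

lemma key_ind (mask : V) (x0 : Fin L → V)
    (hD0 : ∀ x i y, 0 ≤ D x i y) (hD1 : ∀ x i, ∑ y, D x i y = 1)
    (hG0 : ∀ z x i, 0 ≤ G z x i)
    (hG1 : ∀ z x, (∃ i, x i = mask) → ∑ i, G z x i = 1)
    (hGsupp : ∀ z x i, x i ≠ mask → G z x i = 0)
    (hx0 : ∀ i, x0 i ≠ mask)
    (hpos : ∀ k, k < L → ∀ x : Fin L → V, 0 < refDist G mask x0 k x →
      ∀ i, x i = mask → 0 < G x0 x i →
        0 < D x i (x0 i) ∧ 0 < Fplan D G x (x0 i) i) :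
    ∀ n k, k + n = L →
      (∑ j ∈ Finset.Ico k L, ∑ x : Fin L → V,
          refDist G mask x0 j x *
            ∑ i ∈ univ.filter (fun i => x i = mask),
              G x0 x i * (Real.log (D x i (x0 i))
                - Real.log (G x0 x i / Fplan D G x (x0 i) i)))
        ≤ ∑ x : Fin L → V, refDist G mask x0 k x * Real.log (bwd D G x0 n x) := by
  intro n
  induction n with
  | zero =>
    intro k hk
    have hL : k = L := by omega
    rw [hL, Finset.Ico_self, Finset.sum_empty]
    refine le_of_eq (Finset.sum_eq_zero fun x _ => ?_).symm
    rw [bwd]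
    by_cases h : x = x0
    · rw [if_pos h, Real.log_one, mul_zero]
    · rw [if_neg h, Real.log_zero, mul_zero]
  | succ n ih =>
    intro k hk
    have hkL : k < L := by omega
    have main : ∀ x : Fin L → V, 0 < refDist G mask x0 k x →
        (∑ i ∈ univ.filter (fun i => x i = mask),
            G x0 x i * (Real.log (D x i (x0 i))
              - Real.log (G x0 x i / Fplan D G x (x0 i) i)))
          + ∑ i ∈ univ.filter (fun i => x i = mask),
              G x0 x i * Real.log (bwd D G x0 n (Function.update x i (x0 i)))
          ≤ Real.log (bwd D G x0 (n + 1) x) := by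
      intro x hr
      obtain ⟨hshape, hcard⟩ := ref_support G hG0 mask x0 hx0 k x hr
      have hmask : ∃ i, x i = mask := by
        by_contra h
        push_neg at h
        have huniv : (univ.filter fun i => x i ≠ mask) = univ :=
          Finset.eq_univ_of_forall fun i => by simp [h i]
        rw [huniv] at hcard
        simp at hcard
        omega
      have hsum1 : ∑ i ∈ univ.filter (fun i => x i = mask), G x0 x i = 1 :=
        sum_G_masked G mask hG1 hGsupp x0 x hmask
      have hsum1' : ∑ i ∈ (univ.filter (fun i => x i = mask)).filter
          (fun i => 0 < G x0 x i), G x0 x i = 1 := by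
        rw [← hsum1]
        exact Finset.sum_filter_of_ne fun i _ hne => (hG0 x0 x i).lt_of_ne (Ne.symm hne)
      have hfacts : ∀ i ∈ (univ.filter (fun i => x i = mask)).filter
          (fun i => 0 < G x0 x i),
          0 < D x i (x0 i) ∧ 0 < Fplan D G x (x0 i) i
            ∧ 0 < bwd D G x0 n (Function.update x i (x0 i)) := by
        intro i hi
        have him : x i = mask := (Finset.mem_filter.mp (Finset.mem_filter.mp hi).1).2
        have hGi : 0 < G x0 x i := (Finset.mem_filter.mp hi).2
        obtain ⟨hD, hF⟩ := hpos k hkL x hr i him hGi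
        have hr' : 0 < refDist G mask x0 (k + 1) (Function.update x i (x0 i)) := by
          rw [refDist]
          have hterm : 0 < refDist G mask x0 k x *
              ∑ i' ∈ Finset.univ.filter
                (fun i' : Fin L => x i' = mask ∧
                  Function.update x i' (x0 i') = Function.update x i (x0 i)), G x0 x i' :=
            mul_pos hr (lt_of_lt_of_le hGi (Finset.single_le_sum
              (f := fun i' => G x0 x i') (fun i' _ => hG0 _ _ _) (by simp [him])))
          exact lt_of_lt_of_le hterm (Finset.single_le_sum
            (f := fun x' => refDist G mask x0 k x' *
              ∑ i' ∈ Finset.univ.filter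
                (fun i' : Fin L => x' i' = mask ∧
                  Function.update x' i' (x0 i') = Function.update x i (x0 i)), G x0 x' i')
            (fun x' _ => mul_nonneg (refDist_nonneg G hG0 mask x0 k x')
              (Finset.sum_nonneg fun i' _ => hG0 _ _ _)) (Finset.mem_univ x))
        exact ⟨hD, hF,
          bwd_pos D G mask x0 hD0 hD1 hG0 hG1 hGsupp hx0 hpos n (k + 1) (by omega) _ hr'⟩
      have hjensen : ∑ i ∈ (univ.filter (fun i => x i = mask)).filter
            (fun i => 0 < G x0 x i),
            G x0 x i * Real.log (D x i (x0 i) * Fplan D G x (x0 i) i *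
              bwd D G x0 n (Function.update x i (x0 i)) / G x0 x i)
          ≤ Real.log (∑ i ∈ (univ.filter (fun i => x i = mask)).filter
            (fun i => 0 < G x0 x i),
            G x0 x i * (D x i (x0 i) * Fplan D G x (x0 i) i *
              bwd D G x0 n (Function.update x i (x0 i)) / G x0 x i)) := by
        refine log_jensen _ _ _ (fun i _ => hG0 x0 x i) hsum1' fun i hi => ?_
        obtain ⟨hD, hF, hb⟩ := hfacts i hi
        have hGi : 0 < G x0 x i := (Finset.mem_filter.mp hi).2
        positivity
      have hGp : ∀ i ∈ (univ.filter (fun i => x i = mask)).filter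
          (fun i => 0 < G x0 x i),
          G x0 x i * (D x i (x0 i) * Fplan D G x (x0 i) i *
              bwd D G x0 n (Function.update x i (x0 i)) / G x0 x i)
            = D x i (x0 i) * Fplan D G x (x0 i) i *
                bwd D G x0 n (Function.update x i (x0 i)) := by
        intro i hi
        have hGi : 0 < G x0 x i := (Finset.mem_filter.mp hi).2
        rw [mul_comm, div_mul_cancel₀ _ hGi.ne']
      have hinj : ∀ a ∈ (univ.filter (fun i => x i = mask)).filter
          (fun i => 0 < G x0 x i), ∀ b ∈ (univ.filter (fun i => x i = mask)).filter
          (fun i => 0 < G x0 x i),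
          Function.update x a (x0 a) = Function.update x b (x0 b) → a = b := by
        intro a _ b hb hab
        by_contra hne
        have h1 : Function.update x a (x0 a) b = Function.update x b (x0 b) b := by
          rw [hab]
        rw [Function.update_of_ne (Ne.symm hne), Function.update_self] at h1
        have hbm : x b = mask := (Finset.mem_filter.mp (Finset.mem_filter.mp hb).1).2
        exact hx0 b (by rw [← h1, hbm])
      have hle1 : ∑ i ∈ (univ.filter (fun i => x i = mask)).filter
            (fun i => 0 < G x0 x i),
            G x0 x i * (D x i (x0 i) * Fplan D G x (x0 i) i *
              bwd D G x0 n (Function.update x i (x0 i)) / G x0 x i)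
          ≤ bwd D G x0 (n + 1) x := by
        rw [Finset.sum_congr rfl hGp]
        calc ∑ i ∈ (univ.filter (fun i => x i = mask)).filter (fun i => 0 < G x0 x i),
              D x i (x0 i) * Fplan D G x (x0 i) i *
                bwd D G x0 n (Function.update x i (x0 i))
            ≤ ∑ i ∈ (univ.filter (fun i => x i = mask)).filter (fun i => 0 < G x0 x i),
                stepKernel D G x (Function.update x i (x0 i)) *
                  bwd D G x0 n (Function.update x i (x0 i)) :=
              Finset.sum_le_sum fun i _ => mul_le_mul_of_nonneg_right
                (stepKernel_ge D G hD0 hD1 hG0 x0 x i)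
                (bwd_nonneg D G hD0 hG0 x0 n _)
          _ = ∑ w ∈ ((univ.filter (fun i => x i = mask)).filter
                (fun i => 0 < G x0 x i)).image (fun i => Function.update x i (x0 i)),
                stepKernel D G x w * bwd D G x0 n w :=
              (Finset.sum_image (f := fun w => stepKernel D G x w * bwd D G x0 n w)
                hinj).symm
          _ ≤ ∑ w : Fin L → V, stepKernel D G x w * bwd D G x0 n w :=
              Finset.sum_le_sum_of_subset_of_nonneg (Finset.subset_univ _)
                (fun w _ _ => mul_nonneg (stepKernel_nonneg D G hD0 hG0 x w)
                  (bwd_nonneg D G hD0 hG0 x0 n w))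
          _ = bwd D G x0 (n + 1) x := by rw [bwd]
      have hT'ne : ((univ.filter (fun i => x i = mask)).filter
          (fun i => 0 < G x0 x i)).Nonempty := by
        rcases Finset.eq_empty_or_nonempty ((univ.filter (fun i => x i = mask)).filter
          (fun i => 0 < G x0 x i)) with h | h
        · rw [h, Finset.sum_empty] at hsum1'; norm_num at hsum1'
        · exact h
      have hpos2 : 0 < ∑ i ∈ (univ.filter (fun i => x i = mask)).filter
          (fun i => 0 < G x0 x i),
          G x0 x i * (D x i (x0 i) * Fplan D G x (x0 i) i *
            bwd D G x0 n (Function.update x i (x0 i)) / G x0 x i) := by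
        rw [Finset.sum_congr rfl hGp]
        refine Finset.sum_pos (fun i hi => ?_) hT'ne
        obtain ⟨hD, hF, hb⟩ := hfacts i hi
        positivity
      have hlog : Real.log (∑ i ∈ (univ.filter (fun i => x i = mask)).filter
            (fun i => 0 < G x0 x i),
            G x0 x i * (D x i (x0 i) * Fplan D G x (x0 i) i *
              bwd D G x0 n (Function.update x i (x0 i)) / G x0 x i))
          ≤ Real.log (bwd D G x0 (n + 1) x) :=
        Real.log_le_log hpos2 hle1
      have hlogp : ∀ i ∈ (univ.filter (fun i => x i = mask)).filter
          (fun i => 0 < G x0 x i),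
          G x0 x i * (Real.log (D x i (x0 i))
              - Real.log (G x0 x i / Fplan D G x (x0 i) i))
            + G x0 x i * Real.log (bwd D G x0 n (Function.update x i (x0 i)))
          = G x0 x i * Real.log (D x i (x0 i) * Fplan D G x (x0 i) i *
              bwd D G x0 n (Function.update x i (x0 i)) / G x0 x i) := by
        intro i hi
        obtain ⟨hD, hF, hb⟩ := hfacts i hi
        have hGi : 0 < G x0 x i := (Finset.mem_filter.mp hi).2
        rw [Real.log_div (by positivity) hGi.ne',
          Real.log_mul (by positivity) hb.ne',
          Real.log_mul hD.ne' hF.ne',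
          Real.log_div hGi.ne' hF.ne']
        ring
      have e1 : ∑ i ∈ univ.filter (fun i => x i = mask),
            G x0 x i * (Real.log (D x i (x0 i))
              - Real.log (G x0 x i / Fplan D G x (x0 i) i))
          = ∑ i ∈ (univ.filter (fun i => x i = mask)).filter (fun i => 0 < G x0 x i),
              G x0 x i * (Real.log (D x i (x0 i))
                - Real.log (G x0 x i / Fplan D G x (x0 i) i)) :=
        (Finset.sum_filter_of_ne fun i _ hne => (hG0 x0 x i).lt_of_ne
          (fun h => hne (by rw [← h, zero_mul]))).symm
      have e2 : ∑ i ∈ univ.filter (fun i => x i = mask),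
            G x0 x i * Real.log (bwd D G x0 n (Function.update x i (x0 i)))
          = ∑ i ∈ (univ.filter (fun i => x i = mask)).filter (fun i => 0 < G x0 x i),
              G x0 x i * Real.log (bwd D G x0 n (Function.update x i (x0 i))) :=
        (Finset.sum_filter_of_ne fun i _ hne => (hG0 x0 x i).lt_of_ne
          (fun h => hne (by rw [← h, zero_mul]))).symm
      calc (∑ i ∈ univ.filter (fun i => x i = mask),
            G x0 x i * (Real.log (D x i (x0 i))
              - Real.log (G x0 x i / Fplan D G x (x0 i) i)))
          + ∑ i ∈ univ.filter (fun i => x i = mask),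
              G x0 x i * Real.log (bwd D G x0 n (Function.update x i (x0 i)))
          = ∑ i ∈ (univ.filter (fun i => x i = mask)).filter (fun i => 0 < G x0 x i),
              G x0 x i * Real.log (D x i (x0 i) * Fplan D G x (x0 i) i *
                bwd D G x0 n (Function.update x i (x0 i)) / G x0 x i) := by
            rw [e1, e2, ← Finset.sum_add_distrib]
            exact Finset.sum_congr rfl hlogp
        _ ≤ _ := le_trans hjensen hlog
    have hstep := refStep G mask x0 (fun w => Real.log (bwd D G x0 n w)) k
    have hih := ih (k + 1) (by omega)
    rw [Finset.sum_eq_sum_Ico_succ_bot hkL]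
    calc (∑ x : Fin L → V,
          refDist G mask x0 k x *
            ∑ i ∈ univ.filter (fun i => x i = mask),
              G x0 x i * (Real.log (D x i (x0 i))
                - Real.log (G x0 x i / Fplan D G x (x0 i) i)))
        + ∑ j ∈ Finset.Ico (k + 1) L, ∑ x : Fin L → V,
            refDist G mask x0 j x *
              ∑ i ∈ univ.filter (fun i => x i = mask),
                G x0 x i * (Real.log (D x i (x0 i))
                  - Real.log (G x0 x i / Fplan D G x (x0 i) i))
        ≤ (∑ x : Fin L → V,
            refDist G mask x0 k x *
              ∑ i ∈ univ.filter (fun i => x i = mask),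
                G x0 x i * (Real.log (D x i (x0 i))
                  - Real.log (G x0 x i / Fplan D G x (x0 i) i)))
          + ∑ w : Fin L → V, refDist G mask x0 (k + 1) w *
              Real.log (bwd D G x0 n w) := add_le_add (le_refl _) hih
      _ = ∑ x : Fin L → V, refDist G mask x0 k x *
            ((∑ i ∈ univ.filter (fun i => x i = mask),
              G x0 x i * (Real.log (D x i (x0 i))
                - Real.log (G x0 x i / Fplan D G x (x0 i) i)))
            + ∑ i ∈ univ.filter (fun i => x i = mask),
                G x0 x i * Real.log (bwd D G x0 n (Function.update x i (x0 i)))) := by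
          rw [hstep, ← Finset.sum_add_distrib]
          exact Finset.sum_congr rfl fun x _ => (mul_add _ _ _).symm
      _ ≤ ∑ x : Fin L → V, refDist G mask x0 k x * Real.log (bwd D G x0 (n + 1) x) := by
          refine Finset.sum_le_sum fun x _ => ?_
          rcases (refDist_nonneg G hG0 mask x0 k x).lt_or_eq with h | h
          · exact mul_le_mul_of_nonneg_left (main x h) h.le
          · rw [← h, zero_mul, zero_mul]

end Aux


/-- **Planner-aware evidence lower bound (P-ELBO).**  For any planner `G`,
`log p^G(x₀) ≥ 𝓔₁(x₀) + 𝓔₂(x₀)`, where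
`𝓔₁(x₀) = L·E_{k ~ Unif{0,…,L-1}} E_{x_k ~ r^G_k}[Σ_{i : x_k^i = m} Cat(i;G(x₀,x_k)) log Cat(x₀^i; D^i(x_k))]`
and
`𝓔₂(x₀) = −L·E_{k ~ Unif{0,…,L-1}} E_{x_k ~ r^G_k}[Σ_{i : x_k^i = m} Cat(i;G(x₀,x_k)) log(Cat(i;G(x₀,x_k)) / F(x_k, x₀^i, i))]`.
The positivity hypothesis `hpos` ensures that no `−∞` terms occur, so that the
extended-real inequality can be stated over `ℝ`. -/
theorem planner_aware_elbo
    {V : Type*} [Fintype V] [DecidableEq V] {L : ℕ}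
    (mask : V)
    (D : (Fin L → V) → Fin L → V → ℝ)
    (G : (Fin L → V) → (Fin L → V) → Fin L → ℝ)
    (hD0 : ∀ x i y, 0 ≤ D x i y) (hD1 : ∀ x i, ∑ y, D x i y = 1)
    (hG0 : ∀ z x i, 0 ≤ G z x i)
    (hG1 : ∀ z x, (∃ i, x i = mask) → ∑ i, G z x i = 1)
    (hGsupp : ∀ z x i, x i ≠ mask → G z x i = 0)
    (x0 : Fin L → V) (hx0 : ∀ i, x0 i ≠ mask)
    (hpos : ∀ k, k < L → ∀ x : Fin L → V, 0 < refDist G mask x0 k x →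
      ∀ i, x i = mask → 0 < G x0 x i →
        0 < D x i (x0 i) ∧ 0 < Fplan D G x (x0 i) i) :
    Real.log (sampleDist D G mask L x0)
      ≥ (L : ℝ) * ((L : ℝ)⁻¹ * ∑ k ∈ Finset.range L, ∑ x : Fin L → V,
          refDist G mask x0 k x *
            ∑ i ∈ Finset.univ.filter (fun i : Fin L => x i = mask),
              G x0 x i * Real.log (D x i (x0 i)))
        + -((L : ℝ) * ((L : ℝ)⁻¹ * ∑ k ∈ Finset.range L, ∑ x : Fin L → V,
            refDist G mask x0 k x *
              ∑ i ∈ Finset.univ.filter (fun i : Fin L => x i = mask),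
                G x0 x i * Real.log (G x0 x i / Fplan D G x (x0 i) i))) := by
  rcases Nat.eq_zero_or_pos L with hL | hL
  · subst hL
    have hx0m : x0 = (fun _ => mask) := funext fun i => i.elim0
    simp [sampleDist, hx0m]
  · have hL0 : (L : ℝ) ≠ 0 := Nat.cast_ne_zero.mpr (by omega)
    rw [← mul_assoc, mul_inv_cancel₀ hL0, one_mul, ← mul_assoc, mul_inv_cancel₀ hL0,
      one_mul, ge_iff_le, ← sub_eq_add_neg]
    have hkey := key_ind D G mask x0 hD0 hD1 hG0 hG1 hGsupp hx0 hpos L 0 (by omega)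
    have hR : ∑ x : Fin L → V, refDist G mask x0 0 x * Real.log (bwd D G x0 L x)
        = Real.log (bwd D G x0 L (fun _ => mask)) := by
      simp only [refDist, ite_mul, one_mul, zero_mul]
      rw [Finset.sum_ite_eq' univ (fun _ => mask) (fun x => Real.log (bwd D G x0 L x))]
      simp
    have hE : (∑ k ∈ Finset.range L, ∑ x : Fin L → V,
          refDist G mask x0 k x *
            ∑ i ∈ Finset.univ.filter (fun i : Fin L => x i = mask),
              G x0 x i * Real.log (D x i (x0 i)))
        - (∑ k ∈ Finset.range L, ∑ x : Fin L → V,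
            refDist G mask x0 k x *
              ∑ i ∈ Finset.univ.filter (fun i : Fin L => x i = mask),
                G x0 x i * Real.log (G x0 x i / Fplan D G x (x0 i) i))
        = ∑ j ∈ Finset.Ico 0 L, ∑ x : Fin L → V,
            refDist G mask x0 j x *
              ∑ i ∈ univ.filter (fun i => x i = mask),
                G x0 x i * (Real.log (D x i (x0 i))
                  - Real.log (G x0 x i / Fplan D G x (x0 i) i)) := by
      rw [← Finset.range_eq_Ico, ← Finset.sum_sub_distrib]
      refine Finset.sum_congr rfl fun k _ => ?_
      rw [← Finset.sum_sub_distrib]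
      refine Finset.sum_congr rfl fun x _ => ?_
      rw [← mul_sub, ← Finset.sum_sub_distrib]
      refine congrArg _ (Finset.sum_congr rfl fun i _ => (mul_sub _ _ _).symm)
    rw [hE, sampleDist_eq_bwd D G mask x0, ← hR]
    exact hkey
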